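/- There exist constants C > 0 and N such that for every n ≥ N the following holds: if G is a connected simple graph on n vertices maximizing p(G) = λ1(G) + λ1(Ḡ) among all graphs on n vertices, and x, x̄ are nonnegative unit eigenvectors of A(G) and A(Ḡ) for λ1(G) and λ1(Ḡ), then n^{-1/2} ≤ max_u x_u ≤ C·n^{-1/2} and n^{-1/2} ≤ max_u x̄_u ≤ C·n^{-1/2}. -/

import Mathlib

/-- The adjacency matrix of a simple graph on `Fin n`, over `ℝ`. -/
noncomputable def adjMat {n : ℕ} (G : SimpleGraph (Fin n)) : Matrix (Fin n) (Fin n) ℝ :=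
  letI : DecidableRel G.Adj := Classical.decRel _
  G.adjMatrix ℝ

/-- The set of eigenvalues of a real square matrix. -/
def eigSet {n : ℕ} (M : Matrix (Fin n) (Fin n) ℝ) : Set ℝ :=
  {mu : ℝ | ∃ x : Fin n → ℝ, x ≠ 0 ∧ M.mulVec x = mu • x}

/-- The largest eigenvalue of a real square matrix. -/
noncomputable def lamMax {n : ℕ} (M : Matrix (Fin n) (Fin n) ℝ) : ℝ := sSup (eigSet M)

/-- The least eigenvalue of a real square matrix. -/
noncomputable def lamMin {n : ℕ} (M : Matrix (Fin n) (Fin n) ℝ) : ℝ := sInf (eigSet M)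

/-- `λ₁(G)`: the largest adjacency eigenvalue of `G`. -/
noncomputable def lam1 {n : ℕ} (G : SimpleGraph (Fin n)) : ℝ := lamMax (adjMat G)

/-- The degree of a vertex. -/
noncomputable def deg {n : ℕ} (G : SimpleGraph (Fin n)) (v : Fin n) : ℕ :=
  Nat.card {u : Fin n // G.Adj v u}

/-- The signless Laplacian `Q(G) = D(G) + A(G)`. -/
noncomputable def signlessLap {n : ℕ} (G : SimpleGraph (Fin n)) : Matrix (Fin n) (Fin n) ℝ :=
  Matrix.diagonal (fun v => (deg G v : ℝ)) + adjMat G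

/-- `q₁(G)`: the largest signless Laplacian eigenvalue. -/
noncomputable def q1 {n : ℕ} (G : SimpleGraph (Fin n)) : ℝ := lamMax (signlessLap G)

/-- `qₙ(G)`: the least signless Laplacian eigenvalue. -/
noncomputable def qmin {n : ℕ} (G : SimpleGraph (Fin n)) : ℝ := lamMin (signlessLap G)

/-- The `Q`-spread `s_Q(G) = q₁(G) - qₙ(G)`. -/
noncomputable def sQ {n : ℕ} (G : SimpleGraph (Fin n)) : ℝ := q1 G - qmin G

/-- The complete split graph `CS_{n,ω}`: a clique on the first `ω` vertices, completely
joined to an independent set on the remaining `n - ω` vertices. -/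
def CS (n w : ℕ) : SimpleGraph (Fin n) where
  Adj u v := u ≠ v ∧ ((u : ℕ) < w ∨ (v : ℕ) < w)
  symm := by constructor; intro u v h; exact ⟨h.1.symm, h.2.symm⟩
  loopless := by constructor; intro u h; exact h.1 rfl

/-- `K_{n-1}^+`: the complete graph on the first `n-1` vertices together with a pendant
vertex (the last vertex) joined to exactly one clique vertex (vertex `0`). -/
def KPlus (n : ℕ) : SimpleGraph (Fin n) where
  Adj u v := u ≠ v ∧ (((u : ℕ) < n - 1 ∧ (v : ℕ) < n - 1) ∨ (u : ℕ) = 0 ∨ (v : ℕ) = 0)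
  symm := by constructor; intro u v h; refine ⟨h.1.symm, ?_⟩; tauto
  loopless := by constructor; intro u h; exact h.1 rfl


open scoped Classical
open Finset

lemma adjMat_apply {n : ℕ} (G : SimpleGraph (Fin n)) (i j : Fin n) :
    adjMat G i j = if G.Adj i j then 1 else 0 := by
  simp [adjMat]

lemma adjMat_nonneg {n : ℕ} (G : SimpleGraph (Fin n)) (i j : Fin n) : 0 ≤ adjMat G i j := by
  rw [adjMat_apply]; split <;> norm_num

lemma adjMat_le_one {n : ℕ} (G : SimpleGraph (Fin n)) (i j : Fin n) : adjMat G i j ≤ 1 := by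
  rw [adjMat_apply]; split <;> norm_num

lemma eigSet_le {n : ℕ} (G : SimpleGraph (Fin n)) {μ : ℝ} (h : μ ∈ eigSet (adjMat G)) :
    μ ≤ (n : ℝ) - 1 := by
  obtain ⟨x, hx0, hx⟩ := h
  obtain ⟨u0, hu0⟩ := Function.ne_iff.mp hx0
  have hne : (Finset.univ : Finset (Fin n)).Nonempty := ⟨u0, mem_univ u0⟩
  obtain ⟨v, -, hv⟩ := Finset.exists_max_image univ (fun u => |x u|) hne
  have hvpos : 0 < |x v| := lt_of_lt_of_le (abs_pos.mpr hu0) (hv u0 (mem_univ u0))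
  have hrow : ∑ u, adjMat G v u * x u = μ * x v := by
    have := congrFun hx v
    simpa [Matrix.mulVec, dotProduct] using this
  have hbound : |μ| * |x v| ≤ ((n:ℝ) - 1) * |x v| := by
    rw [← abs_mul, ← hrow]
    calc |∑ u, adjMat G v u * x u| ≤ ∑ u, |adjMat G v u * x u| :=
          Finset.abs_sum_le_sum_abs _ _
      _ = |adjMat G v v * x v| + ∑ u ∈ univ.erase v, |adjMat G v u * x u| :=
          (Finset.add_sum_erase univ _ (mem_univ v)).symm
      _ ≤ 0 + ∑ u ∈ univ.erase v, |x v| := by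
          apply add_le_add
          · simp [adjMat_apply]
          · apply Finset.sum_le_sum
            intro u hu
            rw [abs_mul]
            calc |adjMat G v u| * |x u| ≤ 1 * |x v| := by
                  apply mul_le_mul _ (hv u (mem_univ u)) (abs_nonneg _) zero_le_one
                  rw [abs_of_nonneg (adjMat_nonneg G v u)]
                  exact adjMat_le_one G v u
              _ = |x v| := one_mul _
      _ = ((n:ℝ) - 1) * |x v| := by
          rw [zero_add, Finset.sum_const, Finset.card_erase_of_mem (mem_univ v),
            Finset.card_univ, Fintype.card_fin, nsmul_eq_mul]
          congr 1
          have hn : 1 ≤ n := v.pos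
          push_cast [Nat.cast_sub hn]
          ring
  calc μ ≤ |μ| := le_abs_self μ
    _ ≤ (n:ℝ) - 1 := le_of_mul_le_mul_right hbound hvpos

lemma eigSet_bddAbove {n : ℕ} (G : SimpleGraph (Fin n)) : BddAbove (eigSet (adjMat G)) :=
  ⟨(n:ℝ) - 1, fun _ h => eigSet_le G h⟩

lemma le_lam1 {n : ℕ} (G : SimpleGraph (Fin n)) {μ : ℝ} (h : μ ∈ eigSet (adjMat G)) :
    μ ≤ lam1 G := le_csSup (eigSet_bddAbove G) h

lemma lam1_le {n : ℕ} (hn : 1 ≤ n) (G : SimpleGraph (Fin n)) : lam1 G ≤ (n:ℝ) - 1 :=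
  Real.sSup_le (fun _ h => eigSet_le G h) (by simp; exact_mod_cast hn)

lemma card_filter_lt {n w : ℕ} (h : w ≤ n) :
    (univ.filter fun u : Fin n => (u : ℕ) < w).card = w := by
  have he : (univ.filter fun u : Fin n => (u : ℕ) < w) =
      (Finset.range w).attachFin (fun m hm => lt_of_lt_of_le (Finset.mem_range.mp hm) h) := by
    ext u; simp [Finset.mem_attachFin]
  rw [he, Finset.card_attachFin, Finset.card_range]

lemma sum_ite_lt {n w : ℕ} (h : w ≤ n) (a b : ℝ) :
    ∑ u : Fin n, (if (u:ℕ) < w then a else b) = w * a + ((n:ℝ) - w) * b := by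
  rw [Finset.sum_ite, Finset.sum_const, Finset.sum_const, card_filter_lt h,
    Finset.filter_not, Finset.card_sdiff_of_subset (Finset.filter_subset _ _), card_filter_lt h,
    Finset.card_univ, Fintype.card_fin, nsmul_eq_mul, nsmul_eq_mul]
  push_cast [Nat.cast_sub h]
  ring

lemma CS_adj {n w : ℕ} (u v : Fin n) :
    (CS n w).Adj u v ↔ u ≠ v ∧ ((u : ℕ) < w ∨ (v : ℕ) < w) := Iff.rfl

lemma CS_eig {n w : ℕ} (hw2 : 2 ≤ w) (hwn : w < n) :
    ((((w:ℝ)-1) + Real.sqrt (((w:ℝ)-1)^2 + 4*(w:ℝ)*((n:ℝ)-(w:ℝ))))/2) ∈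
      eigSet (adjMat (CS n w)) := by
  set d : ℝ := (w:ℝ) with hd
  set m : ℝ := (n:ℝ) with hm
  set s : ℝ := Real.sqrt ((d-1)^2 + 4*d*(m-d)) with hs
  set μ : ℝ := ((d-1) + s)/2 with hμdef
  have hdm : d ≤ m := by rw [hd, hm]; exact_mod_cast hwn.le
  have hd0 : (0:ℝ) ≤ d := by positivity
  have hargs : (0:ℝ) ≤ (d-1)^2 + 4*d*(m-d) := by nlinarith
  have hs2 : s^2 = (d-1)^2 + 4*d*(m-d) := Real.sq_sqrt hargs
  have hs0 : 0 ≤ s := Real.sqrt_nonneg _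
  have hd1 : (1:ℝ) ≤ d - 1 := by
    have : (2:ℝ) ≤ d := by rw [hd]; exact_mod_cast hw2
    linarith
  have hsge : d - 1 ≤ s := by
    rw [hs]
    calc d - 1 = Real.sqrt ((d-1)^2) := by
          rw [Real.sqrt_sq (by linarith)]
      _ ≤ s := Real.sqrt_le_sqrt (by nlinarith)
  have hμpos : 0 < μ := by rw [hμdef]; linarith
  have hμ2 : μ^2 = (d-1)*μ + d*(m-d) := by
    have : (2*μ - (d-1))^2 = s^2 := by rw [hμdef]; ring_nf
    nlinarith [this, hs2]
  refine ⟨fun v => if (v:ℕ) < w then μ else d, ?_, ?_⟩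
  · intro h
    have h0 : ((⟨0, by omega⟩ : Fin n) : ℕ) < w := by simpa using by omega
    have := congrFun h ⟨0, by omega⟩
    simp only [h0, if_pos, Pi.zero_apply] at this
    linarith
  · funext v
    have hmv : (adjMat (CS n w)).mulVec (fun v => if (v:ℕ) < w then μ else d) v =
        ∑ u, (if (CS n w).Adj v u then (1:ℝ) else 0) * (if (u:ℕ) < w then μ else d) := by
      simp [Matrix.mulVec, dotProduct, adjMat_apply]
    rw [hmv]
    by_cases hv : (v:ℕ) < w
    · have key : ∀ u : Fin n, (if (CS n w).Adj v u then (1:ℝ) else 0) *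
          (if (u:ℕ) < w then μ else d) =
          (if (u:ℕ) < w then μ else d) - (if v = u then (if (u:ℕ) < w then μ else d) else 0) := by
        intro u
        by_cases h : v = u
        · subst h; simp [CS_adj]
        · have : (CS n w).Adj v u := ⟨h, Or.inl hv⟩
          simp [this, h]
      rw [Finset.sum_congr rfl (fun u _ => key u), Finset.sum_sub_distrib,
        Finset.sum_ite_eq, sum_ite_lt hwn.le]
      simp only [Pi.smul_apply, smul_eq_mul, mem_univ, if_pos, hv]
      nlinarith [hμ2]
    · have key : ∀ u : Fin n, (if (CS n w).Adj v u then (1:ℝ) else 0) *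
          (if (u:ℕ) < w then μ else d) = (if (u:ℕ) < w then μ else 0) := by
        intro u
        by_cases h : (u:ℕ) < w
        · have hne : v ≠ u := by intro he; rw [he] at hv; exact hv h
          have : (CS n w).Adj v u := ⟨hne, Or.inr h⟩
          simp [this, h]
        · have : ¬ (CS n w).Adj v u := by
            intro ha
            rcases ha.2 with h1 | h1
            exacts [hv h1, h h1]
          simp [this, h]
      rw [Finset.sum_congr rfl (fun u _ => key u), sum_ite_lt hwn.le]
      simp only [Pi.smul_apply, smul_eq_mul, hv, if_neg, if_false]
      ring

lemma CS_compl_eig {n w : ℕ} (hwn : w < n) :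
    ((n:ℝ) - (w:ℝ) - 1) ∈ eigSet (adjMat (CS n w)ᶜ) := by
  refine ⟨fun v => if (v:ℕ) < w then 0 else 1, ?_, ?_⟩
  · intro h
    have := congrFun h ⟨w, hwn⟩
    simp at this
  · funext v
    have hmv : (adjMat (CS n w)ᶜ).mulVec (fun v => if (v:ℕ) < w then (0:ℝ) else 1) v =
        ∑ u, (if (CS n w)ᶜ.Adj v u then (1:ℝ) else 0) * (if (u:ℕ) < w then (0:ℝ) else 1) := by
      simp [Matrix.mulVec, dotProduct, adjMat_apply]
    rw [hmv]
    have hadj : ∀ u : Fin n, (CS n w)ᶜ.Adj v u ↔ v ≠ u ∧ ¬ (v:ℕ) < w ∧ ¬ (u:ℕ) < w := by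
      intro u
      rw [SimpleGraph.compl_adj, CS_adj]
      constructor
      · rintro ⟨h1, h2⟩
        push_neg at h2
        exact ⟨h1, not_lt.mpr (h2 h1).1, not_lt.mpr (h2 h1).2⟩
      · rintro ⟨h1, h2, h3⟩
        exact ⟨h1, fun h => h.2.elim h2 h3⟩
    by_cases hv : (v:ℕ) < w
    · have key : ∀ u : Fin n, (if (CS n w)ᶜ.Adj v u then (1:ℝ) else 0) *
          (if (u:ℕ) < w then (0:ℝ) else 1) = 0 := by
        intro u
        have : ¬ (CS n w)ᶜ.Adj v u := by
          rw [hadj]; rintro ⟨-, h2, -⟩; exact h2 hv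
        simp [this]
      rw [Finset.sum_congr rfl (fun u _ => key u), Finset.sum_const, smul_zero]
      simp [hv]
    · have key : ∀ u : Fin n, (if (CS n w)ᶜ.Adj v u then (1:ℝ) else 0) *
          (if (u:ℕ) < w then (0:ℝ) else 1) =
          (if (u:ℕ) < w then (0:ℝ) else 1) - (if v = u then (if (u:ℕ) < w then (0:ℝ) else 1) else 0) := by
        intro u
        by_cases h : v = u
        · subst h; simp
        · by_cases h2 : (u:ℕ) < w
          · simp [h2, h]
          · have : (CS n w)ᶜ.Adj v u := (hadj u).mpr ⟨h, hv, h2⟩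
            simp [this, h, h2]
      rw [Finset.sum_congr rfl (fun u _ => key u), Finset.sum_sub_distrib,
        Finset.sum_ite_eq, sum_ite_lt hwn.le]
      simp only [Pi.smul_apply, smul_eq_mul, mem_univ, if_pos, hv, if_neg, if_false]
      ring

lemma sup_bounds {n : ℕ} (hn : 1 ≤ n) {L : ℝ} {x : Fin n → ℝ}
    (A : Matrix (Fin n) (Fin n) ℝ)
    (hA0 : ∀ i j, 0 ≤ A i j) (hA1 : ∀ i j, A i j ≤ 1)
    (hx0 : ∀ v, 0 ≤ x v) (hsum : ∑ v, x v ^ 2 = 1)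
    (heig : A.mulVec x = L • x) (hL : (n:ℝ)/10 ≤ L) :
    1 / Real.sqrt n ≤ (⨆ u, x u) ∧ (⨆ u, x u) ≤ 10 / Real.sqrt n := by
  have hnpos : (0:ℝ) < n := by exact_mod_cast hn
  have hspos : 0 < Real.sqrt n := Real.sqrt_pos.mpr hnpos
  haveI : Nonempty (Fin n) := Fin.pos_iff_nonempty.mp hn
  have hne : (Finset.univ : Finset (Fin n)).Nonempty := univ_nonempty
  obtain ⟨v, -, hv⟩ := Finset.exists_max_image univ x hne
  have hsup : (⨆ u, x u) = x v :=
    le_antisymm (ciSup_le fun u => hv u (mem_univ u)) (le_ciSup (Set.Finite.bddAbove (Set.finite_range x)) v)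
  constructor
  · -- lower bound
    rw [hsup]
    by_contra hcon
    push_neg at hcon
    have hall : ∀ u : Fin n, x u < 1 / Real.sqrt n := fun u =>
      lt_of_le_of_lt (hv u (mem_univ u)) hcon
    have hlt : ∑ u : Fin n, x u ^ 2 < ∑ _u : Fin n, (1:ℝ)/n := by
      apply Finset.sum_lt_sum_of_nonempty hne
      intro u _
      have h1 : x u ^ 2 < (1 / Real.sqrt n)^2 := by
        apply pow_lt_pow_left₀ (hall u) (hx0 u)
        norm_num
      calc x u ^ 2 < (1 / Real.sqrt n)^2 := h1
        _ = 1 / n := by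
            rw [div_pow, one_pow, Real.sq_sqrt hnpos.le]
    rw [hsum, Finset.sum_const, Finset.card_univ, Fintype.card_fin, nsmul_eq_mul] at hlt
    rw [mul_one_div, div_self (ne_of_gt hnpos)] at hlt
    exact lt_irrefl 1 hlt
  · -- upper bound
    rw [hsup]
    have hrow : ∑ u, A v u * x u = L * x v := by
      have := congrFun heig v
      simpa [Matrix.mulVec, dotProduct] using this
    have hCS : (∑ u, A v u * x u)^2 ≤ (∑ u, (A v u)^2) * (∑ u, x u ^ 2) :=
      Finset.sum_mul_sq_le_sq_mul_sq univ _ _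
    have hA2 : (∑ u, (A v u)^2) ≤ (n:ℝ) := by
      calc (∑ u, (A v u)^2) ≤ ∑ _u : Fin n, (1:ℝ) := by
            apply Finset.sum_le_sum
            intro u _
            nlinarith [hA0 v u, hA1 v u]
        _ = n := by simp
    have hLx2 : (L * x v)^2 ≤ (n:ℝ) := by
      rw [← hrow]
      calc (∑ u, A v u * x u)^2 ≤ (∑ u, (A v u)^2) * (∑ u, x u ^ 2) := hCS
        _ = (∑ u, (A v u)^2) := by rw [hsum, mul_one]
        _ ≤ n := hA2
    have hLx0 : 0 ≤ L * x v := mul_nonneg (le_trans (by positivity) hL) (hx0 v)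
    have hLxs : L * x v ≤ Real.sqrt n := by
      calc L * x v = Real.sqrt ((L * x v)^2) := (Real.sqrt_sq hLx0).symm
        _ ≤ Real.sqrt n := Real.sqrt_le_sqrt hLx2
    have hmain : (n:ℝ)/10 * x v ≤ Real.sqrt n :=
      le_trans (mul_le_mul_of_nonneg_right hL (hx0 v)) hLxs
    rw [le_div_iff₀ hspos]
    nlinarith [Real.sq_sqrt hnpos.le, hmain, hx0 v, hspos]

theorem stmt2 :
    ∃ C : ℝ, 0 < C ∧ ∃ N : ℕ, ∀ n : ℕ, N ≤ n →
      ∀ G : SimpleGraph (Fin n), G.Connected →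
        (∀ H : SimpleGraph (Fin n), lam1 H + lam1 Hᶜ ≤ lam1 G + lam1 Gᶜ) →
        ∀ x xb : Fin n → ℝ,
          (∀ v, 0 ≤ x v) → (∀ v, 0 ≤ xb v) →
          (∑ v, x v ^ 2 = 1) → (∑ v, xb v ^ 2 = 1) →
          (adjMat G).mulVec x = lam1 G • x →
          (adjMat Gᶜ).mulVec xb = lam1 Gᶜ • xb →
          (1 / Real.sqrt n ≤ ⨆ u, x u ∧ (⨆ u, x u) ≤ C / Real.sqrt n) ∧
          (1 / Real.sqrt n ≤ ⨆ u, xb u ∧ (⨆ u, xb u) ≤ C / Real.sqrt n) := by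
  refine ⟨10, by norm_num, 1000, ?_⟩
  intro n hn G _hconn hmax x xb hx0 hxb0 hxs hxbs hex hexb
  have hn1 : 1 ≤ n := by omega
  set w : ℕ := 2*(n/3) with hw
  have hw2 : 2 ≤ w := by omega
  have hwn : w < n := by omega
  have h3w1 : 2*n ≤ 3*w + 4 := by omega
  have h3w2 : 3*w ≤ 2*n := by omega
  have hm : (1000:ℝ) ≤ (n:ℝ) := by exact_mod_cast hn
  have ha : (0:ℝ) ≤ 3*(w:ℝ) + 4 - 2*(n:ℝ) := by
    have : ((2*n:ℕ):ℝ) ≤ ((3*w+4:ℕ):ℝ) := by exact_mod_cast h3w1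
    push_cast at this; linarith
  have hb : (0:ℝ) ≤ 2*(n:ℝ) - 3*(w:ℝ) := by
    have : ((3*w:ℕ):ℝ) ≤ ((2*n:ℕ):ℝ) := by exact_mod_cast h3w2
    push_cast at this; linarith
  have hdm : (w:ℝ) ≤ (n:ℝ) := by exact_mod_cast hwn.le
  have hd0 : (0:ℝ) ≤ (w:ℝ) := by positivity
  have hargs : (0:ℝ) ≤ ((w:ℝ)-1)^2 + 4*(w:ℝ)*((n:ℝ)-(w:ℝ)) := by nlinarith
  have hs2 : (Real.sqrt (((w:ℝ)-1)^2 + 4*(w:ℝ)*((n:ℝ)-(w:ℝ))))^2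
      = ((w:ℝ)-1)^2 + 4*(w:ℝ)*((n:ℝ)-(w:ℝ)) := Real.sq_sqrt hargs
  have hs0 : 0 ≤ Real.sqrt (((w:ℝ)-1)^2 + 4*(w:ℝ)*((n:ℝ)-(w:ℝ))) := Real.sqrt_nonneg _
  have h1 : (((w:ℝ)-1) + Real.sqrt (((w:ℝ)-1)^2 + 4*(w:ℝ)*((n:ℝ)-(w:ℝ))))/2
      ≤ lam1 (CS n w) := le_lam1 _ (CS_eig hw2 hwn)
  have h2 : (n:ℝ) - (w:ℝ) - 1 ≤ lam1 (CS n w)ᶜ := le_lam1 _ (CS_compl_eig hwn)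
  have h3 := hmax (CS n w)
  have hG1 : lam1 G ≤ (n:ℝ) - 1 := lam1_le hn1 G
  have hG2 : lam1 Gᶜ ≤ (n:ℝ) - 1 := lam1_le hn1 Gᶜ
  have hsge : (w:ℝ) + 1 + (n:ℝ)/5 ≤ Real.sqrt (((w:ℝ)-1)^2 + 4*(w:ℝ)*((n:ℝ)-(w:ℝ))) := by
    have ht2 : ((w:ℝ) + 1 + (n:ℝ)/5)^2 ≤ ((w:ℝ)-1)^2 + 4*(w:ℝ)*((n:ℝ)-(w:ℝ)) := by
      nlinarith [mul_nonneg ha hb, mul_nonneg hb (by linarith : (0:ℝ) ≤ (n:ℝ) - 1000),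
        mul_nonneg ha (by linarith : (0:ℝ) ≤ (n:ℝ) - 1000), sq_nonneg ((n:ℝ) - 1000)]
    nlinarith [ht2, hs0, hs2, hd0, hm]
  have hμlow : (w:ℝ) + (n:ℝ)/10
      ≤ (((w:ℝ)-1) + Real.sqrt (((w:ℝ)-1)^2 + 4*(w:ℝ)*((n:ℝ)-(w:ℝ))))/2 := by
    linarith
  have hLG : (n:ℝ)/10 ≤ lam1 G := by linarith
  have hLGc : (n:ℝ)/10 ≤ lam1 Gᶜ := by linarith
  exact ⟨sup_bounds hn1 (adjMat G) (adjMat_nonneg G) (adjMat_le_one G) hx0 hxs hex hLG,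
    sup_bounds hn1 (adjMat Gᶜ) (adjMat_nonneg Gᶜ) (adjMat_le_one Gᶜ) hxb0 hxbs hexb hLGc⟩
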